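/- arXiv:2411.16464 — 7 statements merged into one kernel-verified Lean document; each statement's English description precedes it below -/
import Mathlib

section
/- Let N ≥ 2, let E be the set of unordered pairs {i,j} of elements of {1,…,N}, let h : E → ℝ satisfy h_e < 0 for every edge e, and let s : {1,…,N} → ℝ satisfy sᵢ ≤ 0 for every i. Define the symmetric E×E matrix M by M_{ee} = h_e + sᵢ + sⱼ for e = {i,j}, M_{ef} = s_v if distinct edges e, f share exactly the vertex v, and M_{ef} = 0 if e and f are disjoint. Then for every x ∈ ℝ^E one has xᵀMx = Σ_{e∈E} h_e x_e² + Σ_{i=1}^N sᵢ (Σ_{e∋i} x_e)², and M is negative definite. -/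
/-- The index set of possible edges of the complete graph on `Fin N`:
unordered pairs, represented by ordered pairs (i,j) with i < j. -/
abbrev EdgeIdx (N : ℕ) := {p : Fin N × Fin N // p.1 < p.2}

open Matrix in
/-- Let N ≥ 2, E the set of unordered pairs of {1,…,N}, h : E → ℝ negative,
s : {1,…,N} → ℝ nonpositive. Define the symmetric E×E matrix M with
M_{ee} = h_e + sᵢ + sⱼ for e = {i,j}, M_{ef} = s_v if distinct e,f share the
vertex v, and M_{ef} = 0 if disjoint. Then for every x ∈ ℝ^E,
xᵀMx = Σ_e h_e x_e² + Σ_i s_i (Σ_{e∋i} x_e)², and M is negative definite. -/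
theorem stmt_4 (N : ℕ) (hN : 2 ≤ N)
    (h : EdgeIdx N → ℝ) (hh : ∀ e, h e < 0)
    (s : Fin N → ℝ) (hs : ∀ i, s i ≤ 0)
    (M : Matrix (EdgeIdx N) (EdgeIdx N) ℝ)
    (hMdiag : ∀ e : EdgeIdx N, M e e = h e + s e.val.1 + s e.val.2)
    (hMshare : ∀ e f : EdgeIdx N, e ≠ f → ∀ v : Fin N,
      (v = e.val.1 ∨ v = e.val.2) → (v = f.val.1 ∨ v = f.val.2) → M e f = s v)
    (hMdisj : ∀ e f : EdgeIdx N, (∀ v : Fin N,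
      ¬((v = e.val.1 ∨ v = e.val.2) ∧ (v = f.val.1 ∨ v = f.val.2))) → M e f = 0)
    (x : EdgeIdx N → ℝ) :
    x ⬝ᵥ M.mulVec x =
      (∑ e : EdgeIdx N, h e * x e ^ 2) +
        ∑ i : Fin N, s i *
          (∑ e : EdgeIdx N, if i = e.val.1 ∨ i = e.val.2 then x e else 0) ^ 2 ∧
    (x ≠ 0 → x ⬝ᵥ M.mulVec x < 0) := by
  classical
  set g : Fin N → EdgeIdx N → ℝ := fun v e => if v = e.val.1 ∨ v = e.val.2 then 1 else 0 with hg
  -- distinct edges share at most one vertex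
  have uniq : ∀ e f : EdgeIdx N, e ≠ f → ∀ v w : Fin N,
      (v = e.val.1 ∨ v = e.val.2) → (v = f.val.1 ∨ v = f.val.2) →
      (w = e.val.1 ∨ w = e.val.2) → (w = f.val.1 ∨ w = f.val.2) → v = w := by
    intro e f hef v w hv1 hv2 hw1 hw2
    by_contra hvw
    apply hef
    have he : (e.val.1 : ℕ) < (e.val.2 : ℕ) := e.prop
    have hf : (f.val.1 : ℕ) < (f.val.2 : ℕ) := f.prop
    have hv1' : (v : ℕ) = e.val.1 ∨ (v : ℕ) = e.val.2 := hv1.imp (congrArg Fin.val) (congrArg Fin.val)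
    have hv2' : (v : ℕ) = f.val.1 ∨ (v : ℕ) = f.val.2 := hv2.imp (congrArg Fin.val) (congrArg Fin.val)
    have hw1' : (w : ℕ) = e.val.1 ∨ (w : ℕ) = e.val.2 := hw1.imp (congrArg Fin.val) (congrArg Fin.val)
    have hw2' : (w : ℕ) = f.val.1 ∨ (w : ℕ) = f.val.2 := hw2.imp (congrArg Fin.val) (congrArg Fin.val)
    have hvw' : (v : ℕ) ≠ (w : ℕ) := fun hq => hvw (Fin.ext hq)
    have h1 : (e.val.1 : ℕ) = f.val.1 ∧ (e.val.2 : ℕ) = f.val.2 := by omega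
    exact Subtype.ext (Prod.ext (Fin.ext h1.1) (Fin.ext h1.2))
  have key : ∀ e f, M e f = (if e = f then h e else 0) + ∑ v : Fin N, s v * g v e * g v f := by
    intro e f
    by_cases hef : e = f
    · subst hef
      have hne : e.val.1 ≠ e.val.2 := ne_of_lt e.prop
      have hterm : ∀ v : Fin N, s v * g v e * g v e =
          (if v = e.val.1 then s v else 0) + (if v = e.val.2 then s v else 0) := by
        intro v
        simp only [hg]
        by_cases h1 : v = e.val.1
        · subst h1; simp [hne]
        · by_cases h2 : v = e.val.2
          · subst h2; simp [h1]
          · simp [h1, h2]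
      rw [hMdiag, if_pos rfl, Finset.sum_congr rfl (fun v _ => hterm v),
        Finset.sum_add_distrib]
      simp only [Finset.sum_ite_eq', Finset.mem_univ, if_pos]
      ring
    · rw [if_neg hef]
      by_cases hsh : ∃ v : Fin N, (v = e.val.1 ∨ v = e.val.2) ∧ (v = f.val.1 ∨ v = f.val.2)
      · obtain ⟨v0, hv0e, hv0f⟩ := hsh
        rw [hMshare e f hef v0 hv0e hv0f]
        have hterm : ∀ v : Fin N, s v * g v e * g v f = if v = v0 then s v else 0 := by
          intro v
          simp only [hg]
          by_cases h1 : (v = e.val.1 ∨ v = e.val.2)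
          · by_cases h2 : (v = f.val.1 ∨ v = f.val.2)
            · have hvv : v = v0 := uniq e f hef v v0 h1 h2 hv0e hv0f
              rcases hvv with rfl
              simp [h1, h2]
            · have : v ≠ v0 := by rintro rfl; exact h2 hv0f
              simp [h1, h2, this]
          · have : v ≠ v0 := by rintro rfl; exact h1 hv0e
            simp [h1, this]
        rw [Finset.sum_congr rfl (fun v _ => hterm v)]
        simp
      · push_neg at hsh
        rw [hMdisj e f (fun v hv => hv.2.elim (hsh v hv.1).1 (hsh v hv.1).2)]
        have hterm : ∀ v : Fin N, s v * g v e * g v f = 0 := by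
          intro v
          simp only [hg]
          by_cases h1 : (v = e.val.1 ∨ v = e.val.2)
          · have h2 : ¬(v = f.val.1 ∨ v = f.val.2) := fun h2 => h2.elim (hsh v h1).1 (hsh v h1).2
            simp [h1, h2]
          · simp [h1]
        simp [hterm]
  have expand : x ⬝ᵥ M.mulVec x =
      (∑ e : EdgeIdx N, h e * x e ^ 2) + ∑ v : Fin N, s v * (∑ e : EdgeIdx N, g v e * x e) ^ 2 := by
    have step1 : x ⬝ᵥ M.mulVec x = ∑ e : EdgeIdx N, ∑ f : EdgeIdx N, x e * M e f * x f := by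
      simp [dotProduct, mulVec, Finset.mul_sum, mul_assoc]
    rw [step1]
    have step2 : ∀ e f : EdgeIdx N, x e * M e f * x f =
        (if e = f then h e * x e ^ 2 else 0) +
          ∑ v : Fin N, s v * (g v e * x e) * (g v f * x f) := by
      intro e f
      rw [key e f, mul_add, add_mul, Finset.mul_sum, Finset.sum_mul]
      congr 1
      · by_cases hef : e = f
        · subst hef; rw [if_pos rfl, if_pos rfl]; ring
        · rw [if_neg hef, if_neg hef]; ring
      · exact Finset.sum_congr rfl fun v _ => by ring
    simp_rw [step2, Finset.sum_add_distrib]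
    congr 1
    · simp
    · have sq_expand : ∀ v : Fin N, s v * (∑ e : EdgeIdx N, g v e * x e) ^ 2 =
          ∑ e : EdgeIdx N, ∑ f : EdgeIdx N, s v * (g v e * x e) * (g v f * x f) := by
        intro v
        rw [sq, Finset.sum_mul_sum, Finset.mul_sum]
        exact Finset.sum_congr rfl fun e _ => by
          rw [Finset.mul_sum]; exact Finset.sum_congr rfl fun f _ => by ring
      rw [Finset.sum_congr rfl (fun v _ => sq_expand v)]
      exact (Finset.sum_congr rfl fun e _ => Finset.sum_comm).trans Finset.sum_comm
  have gx : ∀ v : Fin N, (∑ e : EdgeIdx N, g v e * x e) =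
      ∑ e : EdgeIdx N, if v = e.val.1 ∨ v = e.val.2 then x e else 0 := by
    intro v
    exact Finset.sum_congr rfl fun e _ => by simp only [hg, ite_mul, one_mul, zero_mul]
  constructor
  · rw [expand]; simp_rw [gx]
  · intro hx
    rw [expand]
    obtain ⟨e0, he0⟩ : ∃ e0, x e0 ≠ 0 := by
      by_contra hc
      push_neg at hc
      exact hx (funext hc)
    have h1 : (∑ e : EdgeIdx N, h e * x e ^ 2) < 0 := by
      have := Finset.sum_lt_sum (f := fun e : EdgeIdx N => h e * x e ^ 2)
        (g := fun _ => (0 : ℝ))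
        (fun e _ => mul_nonpos_of_nonpos_of_nonneg (hh e).le (sq_nonneg _))
        ⟨e0, Finset.mem_univ _, by
          have : 0 < x e0 ^ 2 := by positivity
          exact mul_neg_of_neg_of_pos (hh e0) this⟩
      simpa using this
    have h2 : (∑ v : Fin N, s v * (∑ e : EdgeIdx N, g v e * x e) ^ 2) ≤ 0 := by
      apply Finset.sum_nonpos
      intro v _
      exact mul_nonpos_of_nonpos_of_nonneg (hs v) (sq_nonneg _)
    linarith
end

section
/- For every n ≥ 1, all real parameters κ > 1, γ > 1, δ > 1, and every vector c ∈ (0,∞)ⁿ, the ALKY utility function U(α; c) = Σ_{j=1}^n (κ α_j c_j − α_j^γ / (1 − α_j^γ)) − (Σ_{j=1}^n α_j)^δ is strictly concave as a function of α on the convex set [0,1)ⁿ. -/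
open Set Finset

/-- `t ↦ t / (1 - t)` is strictly convex on `[0,1)`. -/
lemma strictConvexOn_div_one_sub :
    StrictConvexOn ℝ (Set.Ico (0:ℝ) 1) (fun t : ℝ => t / (1 - t)) := by
  refine ⟨convex_Ico 0 1, ?_⟩
  rintro u ⟨hu0, hu1⟩ v ⟨hv0, hv1⟩ huv a b ha hb hab
  simp only [smul_eq_mul]
  have hp : (0:ℝ) < 1 - u := by linarith
  have hq : (0:ℝ) < 1 - v := by linarith
  have hw : (0:ℝ) < 1 - (a * u + b * v) := by nlinarith
  rw [show a * (u / (1 - u)) + b * (v / (1 - v))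
      = (a * u * (1 - v) + b * v * (1 - u)) / ((1 - u) * (1 - v)) by
    field_simp]
  rw [div_lt_div_iff₀ hw (by positivity)]
  have hb' : b = 1 - a := by linarith
  subst hb'
  nlinarith [mul_pos (mul_pos ha hb) (sq_pos_of_ne_zero (sub_ne_zero.mpr huv))]

/-- `x ↦ x ^ γ` maps `[0,1)` onto `[0,1)` for `γ > 1`. -/
lemma image_rpow_Ico {γ : ℝ} (hγ : 1 < γ) :
    (fun x : ℝ => x ^ γ) '' Set.Ico (0:ℝ) 1 = Set.Ico (0:ℝ) 1 := by
  ext y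
  constructor
  · rintro ⟨x, ⟨hx0, hx1⟩, rfl⟩
    exact ⟨Real.rpow_nonneg hx0 γ, Real.rpow_lt_one hx0 hx1 (by linarith)⟩
  · rintro ⟨hy0, hy1⟩
    refine ⟨y ^ (1/γ), ⟨Real.rpow_nonneg hy0 _,
      Real.rpow_lt_one hy0 hy1 (by positivity)⟩, ?_⟩
    show (y ^ (1/γ)) ^ γ = y
    rw [← Real.rpow_mul hy0, one_div_mul_cancel (by linarith : γ ≠ 0), Real.rpow_one]

/-- `x ↦ x ^ γ / (1 - x ^ γ)` is strictly convex on `[0,1)` for `γ > 1`. -/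
lemma strictConvexOn_alky_term {γ : ℝ} (hγ : 1 < γ) :
    StrictConvexOn ℝ (Set.Ico (0:ℝ) 1) (fun x : ℝ => x ^ γ / (1 - x ^ γ)) := by
  have hmono : StrictMonoOn (fun t : ℝ => t / (1 - t)) (Set.Ico (0:ℝ) 1) := by
    rintro u ⟨hu0, hu1⟩ v ⟨hv0, hv1⟩ huv
    have hp : (0:ℝ) < 1 - u := by linarith
    have hq : (0:ℝ) < 1 - v := by linarith
    simp only
    rw [div_lt_div_iff₀ hp hq]
    nlinarith
  have hf : StrictConvexOn ℝ (Set.Ico (0:ℝ) 1) (fun x : ℝ => x ^ γ) :=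
    (strictConvexOn_rpow hγ).subset Set.Ico_subset_Ici_self (convex_Ico 0 1)
  have hinj : Set.InjOn (fun x : ℝ => x ^ γ) (Set.Ico (0:ℝ) 1) := by
    rintro u ⟨hu0, _⟩ v ⟨hv0, _⟩ h
    rcases lt_trichotomy u v with h' | h' | h'
    · exact absurd h (ne_of_lt (Real.rpow_lt_rpow hu0 h' (by linarith)))
    · exact h'
    · exact absurd h (ne_of_gt (Real.rpow_lt_rpow hv0 h' (by linarith)))
  exact StrictConvexOn.comp
    (g := fun t : ℝ => t / (1 - t)) (f := fun x : ℝ => x ^ γ)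
    (by rw [image_rpow_Ico hγ]; exact strictConvexOn_div_one_sub)
    hf (by rw [image_rpow_Ico hγ]; exact hmono) hinj

/-- The ALKY utility function with parameters κ, γ, δ and compatibility
vector c, as a function of the weight vector α. -/
noncomputable def ALKY (n : ℕ) (κ γ δ : ℝ) (c : Fin n → ℝ) (α : Fin n → ℝ) : ℝ :=
  (∑ j, (κ * α j * c j - α j ^ γ / (1 - α j ^ γ))) - (∑ j, α j) ^ δ

/-- For every n ≥ 1, parameters κ, γ, δ > 1 and c ∈ (0,∞)ⁿ, the ALKY utility
is strictly concave in α on [0,1)ⁿ. -/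
theorem stmt_5 (n : ℕ) (hn : 1 ≤ n) (κ γ δ : ℝ) (hκ : 1 < κ) (hγ : 1 < γ) (hδ : 1 < δ)
    (c : Fin n → ℝ) (hc : ∀ j, 0 < c j) :
    StrictConcaveOn ℝ {α : Fin n → ℝ | ∀ j, α j ∈ Set.Ico (0:ℝ) 1}
      (ALKY n κ γ δ c) := by
  have hF := strictConvexOn_alky_term hγ
  have hG : ConvexOn ℝ (Set.Ici (0:ℝ)) (fun x : ℝ => x ^ δ) := convexOn_rpow hδ.le
  constructor
  · intro x hx y hy a b ha hb hab j
    exact (convex_Ico (0:ℝ) 1) (hx j) (hy j) ha hb hab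
  · intro x hx y hy hxy a b ha hb hab
    obtain ⟨j0, hj0⟩ := Function.ne_iff.mp hxy
    set f : ℝ → ℝ := fun t => t ^ γ / (1 - t ^ γ) with hf_def
    -- coordinates of the combination
    have hcoord : ∀ j, (a • x + b • y) j = a * x j + b * y j := fun j => rfl
    -- strict convexity of f summed over coordinates
    have hle : ∀ j ∈ Finset.univ, f (a * x j + b * y j) ≤ a * f (x j) + b * f (y j) := by
      intro j _
      simpa using hF.convexOn.2 (hx j) (hy j) ha.le hb.le hab
    have hlt : f (a * x j0 + b * y j0) < a * f (x j0) + b * f (y j0) := by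
      simpa using hF.2 (hx j0) (hy j0) hj0 ha hb hab
    have hsumf : ∑ j, f (a * x j + b * y j)
        < a * ∑ j, f (x j) + b * ∑ j, f (y j) := by
      calc ∑ j, f (a * x j + b * y j)
          < ∑ j, (a * f (x j) + b * f (y j)) :=
            Finset.sum_lt_sum hle ⟨j0, Finset.mem_univ j0, hlt⟩
        _ = a * ∑ j, f (x j) + b * ∑ j, f (y j) := by
            rw [Finset.sum_add_distrib, Finset.mul_sum, Finset.mul_sum]
    -- linear part
    have hlin : ∑ j, κ * (a * x j + b * y j) * c j
        = a * ∑ j, κ * x j * c j + b * ∑ j, κ * y j * c j := by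
      rw [Finset.mul_sum, Finset.mul_sum, ← Finset.sum_add_distrib]
      exact Finset.sum_congr rfl fun j _ => by ring
    -- power-of-sum part
    have hxs : (0:ℝ) ≤ ∑ j, x j := Finset.sum_nonneg fun j _ => (hx j).1
    have hys : (0:ℝ) ≤ ∑ j, y j := Finset.sum_nonneg fun j _ => (hy j).1
    have hsum_comb : ∑ j, (a * x j + b * y j) = a * ∑ j, x j + b * ∑ j, y j := by
      rw [Finset.mul_sum, Finset.mul_sum, ← Finset.sum_add_distrib]
    have hpow : (a * ∑ j, x j + b * ∑ j, y j) ^ δ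
        ≤ a * (∑ j, x j) ^ δ + b * (∑ j, y j) ^ δ := by
      simpa using hG.2 hxs hys ha.le hb.le hab
    -- assemble
    simp only [smul_eq_mul, ALKY, hcoord]
    rw [Finset.sum_sub_distrib, Finset.sum_sub_distrib, Finset.sum_sub_distrib,
      hsum_comb, hlin]
    have h1 : ∑ j, (a * x j + b * y j) ^ γ / (1 - (a * x j + b * y j) ^ γ)
        = ∑ j, f (a * x j + b * y j) := rfl
    have h2 : ∑ j, x j ^ γ / (1 - x j ^ γ) = ∑ j, f (x j) := rfl
    have h3 : ∑ j, y j ^ γ / (1 - y j ^ γ) = ∑ j, f (y j) := rfl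
    rw [h1, h2, h3]
    nlinarith [hsumf, hpow]
end

section
/- For every n ≥ 1, all parameters κ, γ, δ > 1 and every c ∈ (0,∞)ⁿ, the Individual Optimization Problem max_{α ∈ [0,1)ⁿ} U(α; c) has exactly one solution: there exists a unique α* ∈ [0,1)ⁿ such that U(α*; c) ≥ U(α; c) for all α ∈ [0,1)ⁿ, with strict inequality for α ≠ α*. -/
lemma hmono_aux {s t : ℝ} (hs : 0 ≤ s) (hst : s < t) (ht : t < 1) :
    s / (1 - s) < t / (1 - t) := by
  rw [div_lt_div_iff₀ (by linarith) (by linarith)]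
  nlinarith

lemma hconv_aux {s t : ℝ} (hs0 : 0 ≤ s) (hs1 : s < 1) (ht0 : 0 ≤ t) (ht1 : t < 1) :
    ((s + t)/2) / (1 - (s + t)/2) ≤ (s / (1 - s) + t / (1 - t)) / 2 := by
  have h1 : (0:ℝ) < 1 - s := by linarith
  have h2 : (0:ℝ) < 1 - t := by linarith
  have h3 : (0:ℝ) < 1 - (s+t)/2 := by linarith
  rw [div_add_div _ _ (ne_of_gt h1) (ne_of_gt h2), div_div, div_div,
    div_le_div_iff₀ (by positivity) (by positivity)]
  nlinarith [sq_nonneg (s - t)]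

lemma gg_mono {γ : ℝ} (hγ : 0 < γ) {x y : ℝ} (hx : 0 ≤ x) (hxy : x < y) (hy : y < 1) :
    x^γ/(1-x^γ) < y^γ/(1-y^γ) :=
  hmono_aux (Real.rpow_nonneg hx γ) (Real.rpow_lt_rpow hx hxy hγ)
    (Real.rpow_lt_one (hx.trans hxy.le) hy hγ)

lemma gg_nonneg {γ : ℝ} (hγ : 0 < γ) {x : ℝ} (hx : x ∈ Set.Ico (0:ℝ) 1) :
    0 ≤ x^γ/(1-x^γ) :=
  div_nonneg (Real.rpow_nonneg hx.1 γ) (by linarith [Real.rpow_lt_one hx.1 hx.2 hγ])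

lemma gg_mid {γ : ℝ} (hγ : 1 < γ) {x y : ℝ} (hx : x ∈ Set.Ico (0:ℝ) 1)
    (hy : y ∈ Set.Ico (0:ℝ) 1) (hxy : x ≠ y) :
    ((x+y)/2)^γ / (1 - ((x+y)/2)^γ) < (x^γ/(1-x^γ) + y^γ/(1-y^γ)) / 2 := by
  have hγ0 : (0:ℝ) < γ := by linarith
  have hsx : (0:ℝ) ≤ x^γ := Real.rpow_nonneg hx.1 γ
  have hsx1 : x^γ < 1 := Real.rpow_lt_one hx.1 hx.2 hγ0
  have hsy : (0:ℝ) ≤ y^γ := Real.rpow_nonneg hy.1 γ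
  have hsy1 : y^γ < 1 := Real.rpow_lt_one hy.1 hy.2 hγ0
  have hu : ((x+y)/2)^γ < (x^γ + y^γ)/2 := by
    have := (strictConvexOn_rpow hγ).2 (Set.mem_Ici.2 hx.1) (Set.mem_Ici.2 hy.1) hxy
      (by norm_num : (0:ℝ) < 1/2) (by norm_num : (0:ℝ) < 1/2) (by norm_num)
    simp only [smul_eq_mul] at this
    calc ((x+y)/2)^γ = (1/2*x + 1/2*y)^γ := by rw [show (x+y)/2 = 1/2*x+1/2*y by ring]
      _ < 1/2*x^γ + 1/2*y^γ := this
      _ = (x^γ + y^γ)/2 := by ring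
  have hw0 : (0:ℝ) ≤ ((x+y)/2)^γ := Real.rpow_nonneg (by linarith [hx.1, hy.1]) γ
  have h1 : ((x+y)/2)^γ / (1 - ((x+y)/2)^γ)
      < ((x^γ+y^γ)/2) / (1 - (x^γ+y^γ)/2) :=
    hmono_aux hw0 hu (by linarith)
  have h2 := hconv_aux hsx hsx1 hsy hsy1
  linarith

lemma gg_mid_le {γ : ℝ} (hγ : 1 < γ) {x y : ℝ} (hx : x ∈ Set.Ico (0:ℝ) 1)
    (hy : y ∈ Set.Ico (0:ℝ) 1) :
    ((x+y)/2)^γ / (1 - ((x+y)/2)^γ) ≤ (x^γ/(1-x^γ) + y^γ/(1-y^γ)) / 2 := by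
  by_cases h : x = y
  · subst h
    rw [show (x+x)/2 = x by ring]
    ring_nf
    exact le_refl _
  · exact (gg_mid hγ hx hy h).le

lemma rpow_mid_le {δ : ℝ} (hδ : 1 < δ) {s t : ℝ} (hs : 0 ≤ s) (ht : 0 ≤ t) :
    ((s + t)/2) ^ δ ≤ (s ^ δ + t ^ δ)/2 := by
  have := (convexOn_rpow hδ.le).2 (Set.mem_Ici.2 hs) (Set.mem_Ici.2 ht)
    (by norm_num : (0:ℝ) ≤ 1/2) (by norm_num : (0:ℝ) ≤ 1/2) (by norm_num)
  simp only [smul_eq_mul] at this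
  calc ((s+t)/2)^δ = (1/2*s + 1/2*t)^δ := by rw [show (s+t)/2 = 1/2*s+1/2*t by ring]
    _ ≤ 1/2*s^δ + 1/2*t^δ := this
    _ = (s^δ + t^δ)/2 := by ring

lemma cont_rpow_const {γ : ℝ} (hγ : 0 < γ) : Continuous fun x : ℝ => x ^ γ :=
  continuous_iff_continuousAt.2 fun x => Real.continuousAt_rpow_const x γ (Or.inr hγ.le)


/-- For every n ≥ 1, κ, γ, δ > 1 and c ∈ (0,∞)ⁿ, the Individual Optimization
Problem max_{α ∈ [0,1)ⁿ} U(α; c) has exactly one solution: a unique α* in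
[0,1)ⁿ dominating every other feasible α, strictly when α ≠ α*. -/
theorem stmt_8 (n : ℕ) (hn : 1 ≤ n) (κ γ δ : ℝ) (hκ : 1 < κ) (hγ : 1 < γ) (hδ : 1 < δ)
    (c : Fin n → ℝ) (hc : ∀ j, 0 < c j) :
    ∃! αstar : Fin n → ℝ, (∀ j, αstar j ∈ Set.Ico (0:ℝ) 1) ∧
      ∀ α : Fin n → ℝ, (∀ j, α j ∈ Set.Ico (0:ℝ) 1) →
        ALKY n κ γ δ c α ≤ ALKY n κ γ δ c αstar ∧
        (α ≠ αstar → ALKY n κ γ δ c α < ALKY n κ γ δ c αstar) := by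
  classical
  have hγ0 : (0:ℝ) < γ := by linarith
  have hδ0 : (0:ℝ) < δ := by linarith
  have hALKY : ∀ α : Fin n → ℝ, ALKY n κ γ δ c α
      = (∑ j, κ * α j * c j) - (∑ j, α j ^ γ / (1 - α j ^ γ)) - (∑ j, α j) ^ δ := by
    intro α
    simp [ALKY, Finset.sum_sub_distrib]
  set B : ℝ := ∑ j, κ * c j with hBdef
  have hB0 : 0 < B := Finset.sum_pos (fun j _ => by have := hc j; positivity)
    ⟨⟨0, hn⟩, Finset.mem_univ _⟩
  set t0 : ℝ := B / (B + 1) with ht0def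
  have ht00 : 0 ≤ t0 := by positivity
  have ht01 : t0 < 1 := by
    rw [div_lt_one (by linarith)]; linarith
  set M : ℝ := t0 ^ γ⁻¹ with hMdef
  have hM0 : 0 ≤ M := Real.rpow_nonneg ht00 _
  have hM1 : M < 1 := Real.rpow_lt_one ht00 ht01 (by positivity)
  have hMγ : M ^ γ = t0 := by
    rw [hMdef, ← Real.rpow_mul ht00, inv_mul_cancel₀ (ne_of_gt hγ0), Real.rpow_one]
  have hgM : M ^ γ / (1 - M ^ γ) = B := by
    rw [hMγ, ht0def]
    have : (1:ℝ) - B/(B+1) = 1/(B+1) := by field_simp; ring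
    rw [this]
    field_simp
  -- value at zero
  have hzero : ALKY n κ γ δ c 0 = 0 := by
    rw [hALKY]
    simp [Real.zero_rpow (ne_of_gt hγ0), Real.zero_rpow (ne_of_gt hδ0)]
  -- bound
  have hbound : ∀ α : Fin n → ℝ, (∀ j, α j ∈ Set.Ico (0:ℝ) 1) → ∀ j0,
      ALKY n κ γ δ c α ≤ B - α j0 ^ γ / (1 - α j0 ^ γ) := by
    intro α hα j0
    rw [hALKY]
    have h1 : ∑ j, κ * α j * c j ≤ B := Finset.sum_le_sum fun j _ => by
      have h := hα j
      have hκc : 0 < κ * c j := mul_pos (by linarith) (hc j)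
      calc κ * α j * c j = (κ * c j) * α j := by ring
        _ ≤ (κ * c j) * 1 := mul_le_mul_of_nonneg_left h.2.le hκc.le
        _ = κ * c j := mul_one _
    have h2 : α j0 ^ γ / (1 - α j0 ^ γ) ≤ ∑ j, α j ^ γ / (1 - α j ^ γ) :=
      Finset.single_le_sum (fun j _ => gg_nonneg hγ0 (hα j)) (Finset.mem_univ j0)
    have h3 : 0 ≤ (∑ j, α j) ^ δ :=
      Real.rpow_nonneg (Finset.sum_nonneg fun j _ => (hα j).1) δ
    linarith
  have hout : ∀ α : Fin n → ℝ, (∀ j, α j ∈ Set.Ico (0:ℝ) 1) →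
      (∃ j0, M < α j0) → ALKY n κ γ δ c α < 0 := by
    rintro α hα ⟨j0, hj0⟩
    have h1 := hbound α hα j0
    have h2 : M ^ γ / (1 - M ^ γ) < α j0 ^ γ / (1 - α j0 ^ γ) :=
      gg_mono hγ0 hM0 hj0 (hα j0).2
    rw [hgM] at h2
    linarith
  -- compact box
  set K : Set (Fin n → ℝ) := Set.pi Set.univ (fun _ => Set.Icc 0 M) with hKdef
  have hKc : IsCompact K := isCompact_univ_pi fun _ => isCompact_Icc
  have h0K : (0 : Fin n → ℝ) ∈ K := by
    intro j _; exact ⟨le_refl 0, hM0⟩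
  have hcont : ContinuousOn (ALKY n κ γ δ c) K := by
    show ContinuousOn (fun α : Fin n → ℝ =>
      (∑ j, (κ * α j * c j - α j ^ γ / (1 - α j ^ γ))) - (∑ j, α j) ^ δ) K
    apply ContinuousOn.sub
    · apply continuousOn_finset_sum
      intro j _
      apply ContinuousOn.sub
      · exact ((continuous_const.mul (continuous_apply j)).mul continuous_const).continuousOn
      · apply ContinuousOn.div
        · exact ((cont_rpow_const hγ0).comp (continuous_apply j)).continuousOn
        · exact (continuous_const.sub
            ((cont_rpow_const hγ0).comp (continuous_apply j))).continuousOn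
        · intro α hα
          have h := hα j (Set.mem_univ j)
          have : α j ^ γ ≤ M ^ γ := Real.rpow_le_rpow h.1 h.2 hγ0.le
          have : α j ^ γ < 1 := by rw [hMγ] at this; linarith
          intro hcontra
          linarith [sub_eq_zero.1 hcontra]
    · exact ((cont_rpow_const hδ0).comp
        (continuous_finset_sum _ fun j _ => continuous_apply j)).continuousOn
  obtain ⟨xs, hxsK, hxsmax⟩ := hKc.exists_isMaxOn ⟨0, h0K⟩ hcont
  have hxsS : ∀ j, xs j ∈ Set.Ico (0:ℝ) 1 := fun j =>
    ⟨(hxsK j (Set.mem_univ j)).1, lt_of_le_of_lt (hxsK j (Set.mem_univ j)).2 hM1⟩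
  have hxs0 : 0 ≤ ALKY n κ γ δ c xs := hzero ▸ hxsmax h0K
  -- global maximality
  have hglob : ∀ α : Fin n → ℝ, (∀ j, α j ∈ Set.Ico (0:ℝ) 1) →
      ALKY n κ γ δ c α ≤ ALKY n κ γ δ c xs := by
    intro α hα
    by_cases hK : α ∈ K
    · exact hxsmax hK
    · have : ∃ j0, M < α j0 := by
        by_contra h
        push_neg at h
        exact hK fun j _ => ⟨(hα j).1, h j⟩
      have := hout α hα this
      linarith
  -- midpoint strict concavity
  have hmid : ∀ x y : Fin n → ℝ, (∀ j, x j ∈ Set.Ico (0:ℝ) 1) →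
      (∀ j, y j ∈ Set.Ico (0:ℝ) 1) → x ≠ y →
      (ALKY n κ γ δ c x + ALKY n κ γ δ c y)/2
        < ALKY n κ γ δ c (fun j => (x j + y j)/2) := by
    intro x y hx hy hxy
    rw [hALKY, hALKY, hALKY]
    obtain ⟨j0, hj0⟩ := Function.ne_iff.1 hxy
    have hgsum : ∑ j, ((x j + y j)/2)^γ/(1-((x j + y j)/2)^γ)
        < ((∑ j, x j ^ γ/(1-x j ^γ)) + ∑ j, y j ^ γ/(1-y j ^γ))/2 := by
      have : ∑ j, ((x j + y j)/2)^γ/(1-((x j + y j)/2)^γ)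
          < ∑ j, (x j ^ γ/(1-x j ^γ) + y j ^ γ/(1-y j ^γ))/2 := by
        apply Finset.sum_lt_sum
        · intro j _; exact gg_mid_le hγ (hx j) (hy j)
        · exact ⟨j0, Finset.mem_univ j0, gg_mid hγ (hx j0) (hy j0) hj0⟩
      calc ∑ j, ((x j + y j)/2)^γ/(1-((x j + y j)/2)^γ)
          < ∑ j, (x j ^ γ/(1-x j ^γ) + y j ^ γ/(1-y j ^γ))/2 := this
        _ = ((∑ j, x j ^ γ/(1-x j ^γ)) + ∑ j, y j ^ γ/(1-y j ^γ))/2 := by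
            rw [← Finset.sum_div, Finset.sum_add_distrib]
    have hδterm : (∑ j, (x j + y j)/2)^δ ≤ ((∑ j, x j)^δ + (∑ j, y j)^δ)/2 := by
      have hsum : ∑ j, (x j + y j)/2 = ((∑ j, x j) + ∑ j, y j)/2 := by
        rw [← Finset.sum_div, Finset.sum_add_distrib]
      rw [hsum]
      exact rpow_mid_le hδ (Finset.sum_nonneg fun j _ => (hx j).1)
        (Finset.sum_nonneg fun j _ => (hy j).1)
    have hlin : ∑ j, κ * ((x j + y j)/2) * c j
        = ((∑ j, κ * x j * c j) + ∑ j, κ * y j * c j)/2 := by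
      rw [← Finset.sum_add_distrib, Finset.sum_div]
      exact Finset.sum_congr rfl fun j _ => by ring
    rw [hlin]
    linarith
  -- strictness
  have hstrict : ∀ α : Fin n → ℝ, (∀ j, α j ∈ Set.Ico (0:ℝ) 1) → α ≠ xs →
      ALKY n κ γ δ c α < ALKY n κ γ δ c xs := by
    intro α hα hne
    by_contra h
    push_neg at h
    have heq : ALKY n κ γ δ c α = ALKY n κ γ δ c xs := le_antisymm (hglob α hα) h
    have hm := hmid α xs hα hxsS hne
    have hmS : ∀ j, (fun j => (α j + xs j)/2) j ∈ Set.Ico (0:ℝ) 1 := fun j =>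
      ⟨by have := (hα j).1; have := (hxsS j).1; positivity,
       by have := (hα j).2; have := (hxsS j).2; simp only; linarith⟩
    have := hglob _ hmS
    rw [heq] at hm
    linarith
  refine ⟨xs, ⟨hxsS, fun α hα => ⟨hglob α hα, fun hne => hstrict α hα hne⟩⟩, ?_⟩
  rintro y ⟨hyS, hy⟩
  by_contra hne
  have h1 : ALKY n κ γ δ c xs < ALKY n κ γ δ c y :=
    (hy xs hxsS).2 (fun h => hne h.symm)
  have h2 := hstrict y hyS hne
  linarith
end

section
/- Let N ≥ 2, κ, γ, δ > 1, and let α ∈ [0,1)^{n_N} be a weight list such that every individual has at least one strictly positive edge weight. Then there exists a unique compatibility list C̄ = (c̄_{ij})_{1≤i<j≤N} for which the gradient of the social objective O(·; C̄) vanishes at α; it is given explicitly by 2κ c̄_{ij} = 2γ α_{ij}^{γ−1}/(1 − α_{ij}^γ)² + δ (Σ_{k≠i} α_{ik})^{δ−1} + δ (Σ_{k≠j} α_{jk})^{δ−1}, every c̄_{ij} is strictly positive, and α is the unique solution of the Social Optimization Problem with compatibility list C̄. -/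
/-- ALKY utility of individual `i` given the compatibility matrix `c` and the
(symmetric) weight matrix `α`: sum over the other individuals j ≠ i. -/
noncomputable def Uind (N : ℕ) (κ γ δ : ℝ) (c : Fin N → Fin N → ℝ) (i : Fin N)
    (α : Fin N → Fin N → ℝ) : ℝ :=
  (∑ j ∈ Finset.univ.erase i, (κ * α i j * c i j - α i j ^ γ / (1 - α i j ^ γ)))
    - (∑ j ∈ Finset.univ.erase i, α i j) ^ δ

/-- The social objective: the sum of the individual utilities. -/
noncomputable def socialObj (N : ℕ) (κ γ δ : ℝ) (c : Fin N → Fin N → ℝ)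
    (α : Fin N → Fin N → ℝ) : ℝ :=
  ∑ i, Uind N κ γ δ c i α

/-- The feasible set of the Social Optimization Problem: symmetric weight
lists with zero diagonal, off-diagonal weights in [0,1), and no isolated
vertex (every individual has at least one strictly positive edge weight). -/
def WeightFeasible (N : ℕ) (α : Fin N → Fin N → ℝ) : Prop :=
  (∀ i j, α i j = α j i) ∧ (∀ i, α i i = 0) ∧
  (∀ i j, i ≠ j → α i j ∈ Set.Ico (0:ℝ) 1) ∧
  (∀ i, ∃ j, j ≠ i ∧ 0 < α i j)

/-- The weight matrix obtained from `α` by setting the (symmetric) weight of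
the edge {i,j} to `t`, keeping all other entries unchanged. -/
def upd {N : ℕ} (α : Fin N → Fin N → ℝ) (i j : Fin N) (t : ℝ) :
    Fin N → Fin N → ℝ :=
  fun k l => if (k = i ∧ l = j) ∨ (k = j ∧ l = i) then t else α k l


private lemma rpow_tangent {p a b : ℝ} (hp : 1 < p) (ha : 0 ≤ a) (hb : 0 ≤ b) :
    a ^ p + p * a ^ (p - 1) * (b - a) ≤ b ^ p := by
  rcases eq_or_lt_of_le ha with h0 | h0
  · rw [← h0, Real.zero_rpow (by linarith), Real.zero_rpow (by linarith)]
    simpa using Real.rpow_nonneg hb p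
  · have hs : -1 ≤ b / a - 1 := by
      have : 0 ≤ b / a := div_nonneg hb h0.le
      linarith
    have key := one_add_mul_self_le_rpow_one_add hs hp.le
    have h1 : (1 : ℝ) + (b / a - 1) = b / a := by ring
    rw [h1, Real.div_rpow hb h0.le] at key
    have hap : 0 < a ^ p := Real.rpow_pos_of_pos h0 p
    have h2 : a ^ (p - 1) = a ^ p / a := by
      rw [Real.rpow_sub h0, Real.rpow_one]
    calc a ^ p + p * a ^ (p - 1) * (b - a)
        = a ^ p * (1 + p * (b / a - 1)) := by rw [h2]; field_simp
      _ ≤ a ^ p * (b ^ p / a ^ p) := mul_le_mul_of_nonneg_left key hap.le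
      _ = b ^ p := by field_simp

private lemma f_tangent_strict {γ a b : ℝ} (hγ : 1 < γ) (ha0 : 0 ≤ a) (ha1 : a < 1)
    (hb0 : 0 ≤ b) (hb1 : b < 1) (hab : a ≠ b) :
    a ^ γ / (1 - a ^ γ) + γ * a ^ (γ - 1) / (1 - a ^ γ) ^ 2 * (b - a)
      < b ^ γ / (1 - b ^ γ) := by
  have hγ0 : (0:ℝ) < γ := by linarith
  have hua : a ^ γ < 1 := Real.rpow_lt_one ha0 ha1 hγ0
  have hub : b ^ γ < 1 := Real.rpow_lt_one hb0 hb1 hγ0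
  have hua0 : 0 ≤ a ^ γ := Real.rpow_nonneg ha0 γ
  have hub0 : 0 ≤ b ^ γ := Real.rpow_nonneg hb0 γ
  have hda : (0:ℝ) < 1 - a ^ γ := by linarith
  have hdb : (0:ℝ) < 1 - b ^ γ := by linarith
  have key := rpow_tangent hγ ha0 hb0
  have huab : b ^ γ - a ^ γ ≠ 0 := by
    rcases lt_or_gt_of_ne hab with h | h
    · have := Real.rpow_lt_rpow ha0 h hγ0; linarith
    · have := Real.rpow_lt_rpow hb0 h hγ0; linarith
  have h1 : 0 ≤ (b ^ γ - a ^ γ - γ * a ^ (γ - 1) * (b - a)) * (1 - b ^ γ) :=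
    mul_nonneg (by linarith) hdb.le
  have h2 : 0 < (b ^ γ - a ^ γ) ^ 2 := by positivity
  have hLHS : a ^ γ / (1 - a ^ γ) + γ * a ^ (γ - 1) / (1 - a ^ γ) ^ 2 * (b - a)
      = (a ^ γ * (1 - a ^ γ) + γ * a ^ (γ - 1) * (b - a)) / (1 - a ^ γ) ^ 2 := by
    field_simp
  rw [hLHS, div_lt_div_iff₀ (by positivity) hdb]
  nlinarith [h1, h2]

private lemma f_tangent {γ a b : ℝ} (hγ : 1 < γ) (ha0 : 0 ≤ a) (ha1 : a < 1)
    (hb0 : 0 ≤ b) (hb1 : b < 1) :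
    a ^ γ / (1 - a ^ γ) + γ * a ^ (γ - 1) / (1 - a ^ γ) ^ 2 * (b - a)
      ≤ b ^ γ / (1 - b ^ γ) := by
  rcases eq_or_ne a b with rfl | hab
  · simp
  · exact (f_tangent_strict hγ ha0 ha1 hb0 hb1 hab).le

open Finset in
private lemma hasDeriv_social (N : ℕ) (κ γ δ : ℝ) (hγ : 1 < γ) (hδ : 1 < δ)
    (c α : Fin N → Fin N → ℝ) {i j : Fin N} (hij : i ≠ j)
    (hsymij : α j i = α i j) (ha0 : 0 ≤ α i j) (ha1 : α i j < 1) :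
    HasDerivAt (fun t => socialObj N κ γ δ c (upd α i j t))
      (κ * c i j + κ * c j i
        - 2 * (γ * α i j ^ (γ - 1) / (1 - α i j ^ γ) ^ 2)
        - δ * (∑ k ∈ univ.erase i, α i k) ^ (δ - 1)
        - δ * (∑ k ∈ univ.erase j, α j k) ^ (δ - 1)) (α i j) := by
  have hji : j ≠ i := hij.symm
  have hjmem : j ∈ (univ : Finset (Fin N)).erase i := mem_erase.2 ⟨hji, mem_univ _⟩
  have himem : i ∈ (univ : Finset (Fin N)).erase j := mem_erase.2 ⟨hij, mem_univ _⟩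
  set a := α i j with ha
  set Ri := ∑ l ∈ ((univ : Finset (Fin N)).erase i).erase j,
      (κ * α i l * c i l - α i l ^ γ / (1 - α i l ^ γ)) with hRi
  set Ti := ∑ l ∈ ((univ : Finset (Fin N)).erase i).erase j, α i l with hTi
  set Rj := ∑ l ∈ ((univ : Finset (Fin N)).erase j).erase i,
      (κ * α j l * c j l - α j l ^ γ / (1 - α j l ^ γ)) with hRj
  set Tj := ∑ l ∈ ((univ : Finset (Fin N)).erase j).erase i, α j l with hTj
  set K := ∑ k ∈ ((univ : Finset (Fin N)).erase i).erase j, Uind N κ γ δ c k α with hK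
  have hupd_i : ∀ t l, upd α i j t i l = if l = j then t else α i l := by
    intro t l
    simp only [upd]
    by_cases h : l = j <;> simp [h, hij]
  have hupd_j : ∀ t l, upd α i j t j l = if l = i then t else α j l := by
    intro t l
    simp only [upd]
    by_cases h : l = i <;> simp [h, hji]
  have hfun : ∀ t, socialObj N κ γ δ c (upd α i j t) =
      ((κ * t * c i j - t ^ γ / (1 - t ^ γ)) + Ri - (t + Ti) ^ δ)
      + ((κ * t * c j i - t ^ γ / (1 - t ^ γ)) + Rj - (t + Tj) ^ δ) + K := by
    intro t
    have c1 : Uind N κ γ δ c i (upd α i j t)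
        = (κ * t * c i j - t ^ γ / (1 - t ^ γ)) + Ri - (t + Ti) ^ δ := by
      unfold Uind
      simp only [hupd_i]
      rw [← Finset.add_sum_erase _
        (fun l => κ * (if l = j then t else α i l) * c i l
          - (if l = j then t else α i l) ^ γ / (1 - (if l = j then t else α i l) ^ γ)) hjmem,
        ← Finset.add_sum_erase _ (fun l => if l = j then t else α i l) hjmem]
      simp only [if_pos rfl]
      congr 2
      · exact Finset.sum_congr rfl fun l hl => by
          rw [if_neg (mem_erase.1 hl).1]
      · congr 1
        exact Finset.sum_congr rfl fun l hl => by rw [if_neg (mem_erase.1 hl).1]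
    have c2 : Uind N κ γ δ c j (upd α i j t)
        = (κ * t * c j i - t ^ γ / (1 - t ^ γ)) + Rj - (t + Tj) ^ δ := by
      unfold Uind
      simp only [hupd_j]
      rw [← Finset.add_sum_erase _
        (fun l => κ * (if l = i then t else α j l) * c j l
          - (if l = i then t else α j l) ^ γ / (1 - (if l = i then t else α j l) ^ γ)) himem,
        ← Finset.add_sum_erase _ (fun l => if l = i then t else α j l) himem]
      simp only [if_pos rfl]
      congr 2
      · exact Finset.sum_congr rfl fun l hl => by
          rw [if_neg (mem_erase.1 hl).1]
      · congr 1
        exact Finset.sum_congr rfl fun l hl => by rw [if_neg (mem_erase.1 hl).1]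
    have c3 : ∀ k, k ≠ i → k ≠ j → Uind N κ γ δ c k (upd α i j t) = Uind N κ γ δ c k α := by
      intro k hki hkj
      have : ∀ l, upd α i j t k l = α k l := by
        intro l; simp [upd, hki, hkj]
      simp only [Uind, this]
    unfold socialObj
    rw [← Finset.add_sum_erase _ _ (mem_univ i), ← Finset.add_sum_erase _ _ hjmem, c1, c2]
    have : ∑ k ∈ ((univ : Finset (Fin N)).erase i).erase j, Uind N κ γ δ c k (upd α i j t)
        = K := by
      refine Finset.sum_congr rfl fun k hk => ?_
      have hk' := mem_erase.1 hk
      exact c3 k (mem_erase.1 hk'.2).1 hk'.1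
    rw [this]; ring
  have hfe : (fun t => socialObj N κ γ δ c (upd α i j t)) =
      fun t => ((κ * t * c i j - t ^ γ / (1 - t ^ γ)) + Ri - (t + Ti) ^ δ)
      + ((κ * t * c j i - t ^ γ / (1 - t ^ γ)) + Rj - (t + Tj) ^ δ) + K := funext hfun
  rw [hfe]
  have hda : (0:ℝ) < 1 - a ^ γ := by
    have : a ^ γ < 1 := Real.rpow_lt_one ha0 ha1 (by linarith)
    linarith
  have hrpow : HasDerivAt (fun t : ℝ => t ^ γ) (γ * a ^ (γ - 1)) a :=
    Real.hasDerivAt_rpow_const (Or.inr hγ.le)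
  have hden : HasDerivAt (fun t : ℝ => 1 - t ^ γ) (0 - γ * a ^ (γ - 1)) a :=
    (hasDerivAt_const a 1).sub hrpow
  have hfrac : HasDerivAt (fun t : ℝ => t ^ γ / (1 - t ^ γ))
      ((γ * a ^ (γ - 1) * (1 - a ^ γ) - a ^ γ * (0 - γ * a ^ (γ - 1))) / (1 - a ^ γ) ^ 2) a :=
    hrpow.div hden (ne_of_gt hda)
  have hA : HasDerivAt (fun t : ℝ => κ * t * c i j) (κ * 1 * c i j) a :=
    ((hasDerivAt_id a).const_mul κ).mul_const (c i j)
  have hA' : HasDerivAt (fun t : ℝ => κ * t * c j i) (κ * 1 * c j i) a :=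
    ((hasDerivAt_id a).const_mul κ).mul_const (c j i)
  have hSi : HasDerivAt (fun t : ℝ => (t + Ti) ^ δ) (δ * (a + Ti) ^ (δ - 1) * 1) a :=
    by have h := (Real.hasDerivAt_rpow_const (x := a + Ti) (p := δ) (Or.inr hδ.le)).comp a
         ((hasDerivAt_id a).add_const Ti); exact h
  have hSj : HasDerivAt (fun t : ℝ => (t + Tj) ^ δ) (δ * (a + Tj) ^ (δ - 1) * 1) a :=
    by have h := (Real.hasDerivAt_rpow_const (x := a + Tj) (p := δ) (Or.inr hδ.le)).comp a
         ((hasDerivAt_id a).add_const Tj); exact h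
  have H := ((((hA.sub hfrac).add_const Ri).sub hSi).add
    (((hA'.sub hfrac).add_const Rj).sub hSj)).add_const K
  refine H.congr_deriv ?_
  have e1 : a + Ti = ∑ k ∈ (univ : Finset (Fin N)).erase i, α i k :=
    Finset.add_sum_erase _ (α i) hjmem
  have e2 : a + Tj = ∑ k ∈ (univ : Finset (Fin N)).erase j, α j k := by
    rw [← hsymij]
    exact Finset.add_sum_erase _ (α j) himem
  rw [← e1, ← e2]
  have hfrac_val : (γ * a ^ (γ - 1) * (1 - a ^ γ) - a ^ γ * (0 - γ * a ^ (γ - 1)))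
      / (1 - a ^ γ) ^ 2 = γ * a ^ (γ - 1) / (1 - a ^ γ) ^ 2 := by
    field_simp
    ring
  rw [hfrac_val]
  ring

open Finset in
private lemma social_opt (N : ℕ) (κ γ δ : ℝ) (hγ : 1 < γ) (hδ : 1 < δ)
    (c α : Fin N → Fin N → ℝ) (hα : WeightFeasible N α)
    (hc : ∀ i j, i ≠ j → 2 * κ * c i j =
      2 * γ * α i j ^ (γ - 1) / (1 - α i j ^ γ) ^ 2
        + δ * (∑ k ∈ univ.erase i, α i k) ^ (δ - 1)
        + δ * (∑ k ∈ univ.erase j, α j k) ^ (δ - 1))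
    (β : Fin N → Fin N → ℝ) (hβ : WeightFeasible N β) (hne : β ≠ α) :
    socialObj N κ γ δ c β < socialObj N κ γ δ c α := by
  obtain ⟨hαs, hαd, hαI, hαp⟩ := hα
  obtain ⟨hβs, hβd, hβI, hβp⟩ := hβ
  set Sα : Fin N → ℝ := fun i => ∑ k ∈ univ.erase i, α i k with hSα
  set Sβ : Fin N → ℝ := fun i => ∑ k ∈ univ.erase i, β i k with hSβ
  have hIα : ∀ i j, j ∈ (univ : Finset (Fin N)).erase i → 0 ≤ α i j ∧ α i j < 1 := by
    intro i j hj
    have := hαI i j (Ne.symm (mem_erase.1 hj).1)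
    exact ⟨this.1, this.2⟩
  have hIβ : ∀ i j, j ∈ (univ : Finset (Fin N)).erase i → 0 ≤ β i j ∧ β i j < 1 := by
    intro i j hj
    have := hβI i j (Ne.symm (mem_erase.1 hj).1)
    exact ⟨this.1, this.2⟩
  have hSα0 : ∀ i, 0 ≤ Sα i := fun i => Finset.sum_nonneg fun j hj => (hIα i j hj).1
  have hSβ0 : ∀ i, 0 ≤ Sβ i := fun i => Finset.sum_nonneg fun j hj => (hIβ i j hj).1
  set φ : Fin N → Fin N → ℝ := fun i j => γ * α i j ^ (γ - 1) / (1 - α i j ^ γ) ^ 2 with hφ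
  set P : Fin N → Fin N → ℝ := fun i j =>
    (κ * c i j - φ i j - δ * Sα i ^ (δ - 1)) * (β i j - α i j) with hPdef
  -- edge inequalities
  have edge : ∀ i, ∀ j ∈ (univ : Finset (Fin N)).erase i,
      κ * β i j * c i j - β i j ^ γ / (1 - β i j ^ γ)
        ≤ (κ * α i j * c i j - α i j ^ γ / (1 - α i j ^ γ))
          + (κ * c i j - φ i j) * (β i j - α i j) := by
    intro i j hj
    have ha := hIα i j hj
    have hb := hIβ i j hj
    have := f_tangent (γ := γ) (a := α i j) (b := β i j) hγ ha.1 ha.2 hb.1 hb.2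
    simp only [hφ]
    nlinarith [this]
  have edge_strict : ∀ i, ∀ j ∈ (univ : Finset (Fin N)).erase i, β i j ≠ α i j →
      κ * β i j * c i j - β i j ^ γ / (1 - β i j ^ γ)
        < (κ * α i j * c i j - α i j ^ γ / (1 - α i j ^ γ))
          + (κ * c i j - φ i j) * (β i j - α i j) := by
    intro i j hj hne'
    have ha := hIα i j hj
    have hb := hIβ i j hj
    have := f_tangent_strict (γ := γ) (a := α i j) (b := β i j) hγ ha.1 ha.2 hb.1 hb.2
      (Ne.symm hne')
    simp only [hφ]
    nlinarith [this]
  -- step A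
  have stepA : ∀ i, (Uind N κ γ δ c i β ≤ Uind N κ γ δ c i α + ∑ j ∈ univ.erase i, P i j)
      ∧ ((∃ j ∈ (univ : Finset (Fin N)).erase i, β i j ≠ α i j) →
        Uind N κ γ δ c i β < Uind N κ γ δ c i α + ∑ j ∈ univ.erase i, P i j) := by
    intro i
    have hS : Sα i ^ δ + δ * Sα i ^ (δ - 1) * (Sβ i - Sα i) ≤ Sβ i ^ δ :=
      rpow_tangent hδ (hSα0 i) (hSβ0 i)
    have hSd : Sβ i - Sα i = ∑ j ∈ univ.erase i, (β i j - α i j) := by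
      rw [Finset.sum_sub_distrib]
    have hP : ∑ j ∈ univ.erase i, P i j
        = (∑ j ∈ univ.erase i, (κ * c i j - φ i j) * (β i j - α i j))
          - δ * Sα i ^ (δ - 1) * (Sβ i - Sα i) := by
      rw [hSd, Finset.mul_sum, ← Finset.sum_sub_distrib]
      exact Finset.sum_congr rfl fun j _ => by simp only [hPdef]; ring
    constructor
    · have h1 : ∑ j ∈ univ.erase i, (κ * β i j * c i j - β i j ^ γ / (1 - β i j ^ γ))
          ≤ ∑ j ∈ univ.erase i, ((κ * α i j * c i j - α i j ^ γ / (1 - α i j ^ γ))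
            + (κ * c i j - φ i j) * (β i j - α i j)) :=
        Finset.sum_le_sum (edge i)
      rw [Finset.sum_add_distrib] at h1
      simp only [Uind]
      rw [hP]
      linarith [h1, hS]
    · rintro ⟨j0, hj0, hj0ne⟩
      have h1 : ∑ j ∈ univ.erase i, (κ * β i j * c i j - β i j ^ γ / (1 - β i j ^ γ))
          < ∑ j ∈ univ.erase i, ((κ * α i j * c i j - α i j ^ γ / (1 - α i j ^ γ))
            + (κ * c i j - φ i j) * (β i j - α i j)) :=
        Finset.sum_lt_sum (edge i) ⟨j0, hj0, edge_strict i j0 hj0 hj0ne⟩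
      rw [Finset.sum_add_distrib] at h1
      simp only [Uind]
      rw [hP]
      linarith [h1, hS]
  -- step B : total of P is zero
  have hswap : ∑ i, ∑ j ∈ univ.erase i, P i j = ∑ i, ∑ j ∈ univ.erase i, P j i := by
    have h1 : ∀ (F : Fin N → Fin N → ℝ), (∑ i, ∑ j ∈ univ.erase i, F i j)
        = ∑ i, ∑ j, if j = i then 0 else F i j := by
      intro F
      refine Finset.sum_congr rfl fun i _ => ?_
      rw [← Finset.add_sum_erase univ (fun j => if j = i then 0 else F i j) (mem_univ i),
        if_pos rfl, zero_add]
      exact Finset.sum_congr rfl fun j hj => (if_neg (mem_erase.1 hj).1).symm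
    rw [h1 P, h1 (fun i j => P j i), Finset.sum_comm]
    refine Finset.sum_congr rfl fun i _ => Finset.sum_congr rfl fun j _ => ?_
    rcases eq_or_ne i j with rfl | h
    · simp
    · rw [if_neg h, if_neg (Ne.symm h)]
  have hpair : ∀ i, ∀ j ∈ (univ : Finset (Fin N)).erase i, P i j + P j i = 0 := by
    intro i j hj
    have hji : j ≠ i := (mem_erase.1 hj).1
    have hij : i ≠ j := hji.symm
    have e1 := hc i j hij
    have e2 := hc j i hji
    rw [hαs j i] at e2
    have hβsym : β j i = β i j := (hβs j i)
    have hαsym : α j i = α i j := (hαs j i)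
    simp only [hPdef, hφ, hβsym, hαsym, hSα]
    linear_combination ((β i j - α i j) / 2) * e1 + ((β i j - α i j) / 2) * e2
  have htot : ∑ i, ∑ j ∈ univ.erase i, P i j = 0 := by
    have h2 : (2:ℝ) * (∑ i, ∑ j ∈ univ.erase i, P i j)
        = ∑ i, ∑ j ∈ univ.erase i, (P i j + P j i) := by
      rw [two_mul]
      nth_rewrite 2 [hswap]
      rw [← Finset.sum_add_distrib]
      exact Finset.sum_congr rfl fun i _ => (Finset.sum_add_distrib).symm
    have h3 : ∑ i, ∑ j ∈ univ.erase i, (P i j + P j i) = 0 := by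
      refine Finset.sum_eq_zero fun i _ => Finset.sum_eq_zero fun j hj => hpair i j hj
    rw [h3] at h2
    linarith
  -- choose a differing entry
  have hdiff : ∃ i0 j0, β i0 j0 ≠ α i0 j0 := by
    by_contra h
    push_neg at h
    exact hne (funext fun i => funext fun j => h i j)
  obtain ⟨i0, j0, hd⟩ := hdiff
  have hi0j0 : j0 ≠ i0 := by
    rintro rfl
    rw [hβd, hαd] at hd
    exact hd rfl
  have hj0mem : j0 ∈ (univ : Finset (Fin N)).erase i0 := mem_erase.2 ⟨hi0j0, mem_univ _⟩
  -- conclude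
  have hmain : socialObj N κ γ δ c β
      < ∑ i, (Uind N κ γ δ c i α + ∑ j ∈ univ.erase i, P i j) := by
    exact Finset.sum_lt_sum (fun i _ => (stepA i).1)
      ⟨i0, mem_univ _, (stepA i0).2 ⟨j0, hj0mem, hd⟩⟩
  rw [Finset.sum_add_distrib, htot, add_zero] at hmain
  exact hmain

/-- For N ≥ 2, κ, γ, δ > 1 and a feasible weight list α (no isolated vertex),
there exists a unique compatibility list C̄ at which the gradient of the
social objective vanishes at α; it is given by
2κ c̄_{ij} = 2γ α_{ij}^{γ−1}/(1−α_{ij}^γ)² + δ(Σ_{k≠i} α_{ik})^{δ−1}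
+ δ(Σ_{k≠j} α_{jk})^{δ−1}, it is strictly positive, and α is the unique
solution of the Social Optimization Problem with compatibility list C̄. -/
theorem stmt_11 (N : ℕ) (hN : 2 ≤ N) (κ γ δ : ℝ) (hκ : 1 < κ) (hγ : 1 < γ) (hδ : 1 < δ)
    (α : Fin N → Fin N → ℝ) (hα : WeightFeasible N α) :
    ∃ cbar : Fin N → Fin N → ℝ,
      ((∀ i j, cbar i j = cbar j i) ∧ (∀ i, cbar i i = 0) ∧
        (∀ i j, i ≠ j →
          deriv (fun t => socialObj N κ γ δ cbar (upd α i j t)) (α i j) = 0)) ∧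
      (∀ c : Fin N → Fin N → ℝ,
        ((∀ i j, c i j = c j i) ∧ (∀ i, c i i = 0) ∧
          (∀ i j, i ≠ j →
            deriv (fun t => socialObj N κ γ δ c (upd α i j t)) (α i j) = 0)) →
        c = cbar) ∧
      (∀ i j, i ≠ j → 2 * κ * cbar i j =
        2 * γ * α i j ^ (γ - 1) / (1 - α i j ^ γ) ^ 2
          + δ * (∑ k ∈ Finset.univ.erase i, α i k) ^ (δ - 1)
          + δ * (∑ k ∈ Finset.univ.erase j, α j k) ^ (δ - 1)) ∧
      (∀ i j, i ≠ j → 0 < cbar i j) ∧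
      (∀ β : Fin N → Fin N → ℝ, WeightFeasible N β → β ≠ α →
        socialObj N κ γ δ cbar β < socialObj N κ γ δ cbar α) := by
  classical
  have hαs := hα.1
  have hαd := hα.2.1
  have hαI := hα.2.2.1
  have hαp := hα.2.2.2
  have hκ2 : (2 * κ) ≠ 0 := by positivity
  set cbar : Fin N → Fin N → ℝ := fun i j => if i = j then 0 else
      (2 * γ * α i j ^ (γ - 1) / (1 - α i j ^ γ) ^ 2
        + δ * (∑ k ∈ Finset.univ.erase i, α i k) ^ (δ - 1)
        + δ * (∑ k ∈ Finset.univ.erase j, α j k) ^ (δ - 1)) / (2 * κ) with hcb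
  have hdiag : ∀ i, cbar i i = 0 := fun i => by simp [hcb]
  have hsymc : ∀ i j, cbar i j = cbar j i := by
    intro i j
    rcases eq_or_ne i j with rfl | h
    · rfl
    · simp only [hcb, if_neg h, if_neg (Ne.symm h)]
      rw [hαs i j]
      ring_nf
  have hform : ∀ i j, i ≠ j → 2 * κ * cbar i j =
      2 * γ * α i j ^ (γ - 1) / (1 - α i j ^ γ) ^ 2
        + δ * (∑ k ∈ Finset.univ.erase i, α i k) ^ (δ - 1)
        + δ * (∑ k ∈ Finset.univ.erase j, α j k) ^ (δ - 1) := by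
    intro i j hij
    simp only [hcb, if_neg hij]
    rw [mul_comm, div_mul_cancel₀ _ hκ2]
  have hderiv : ∀ i j, i ≠ j →
      deriv (fun t => socialObj N κ γ δ cbar (upd α i j t)) (α i j) = 0 := by
    intro i j hij
    rw [(hasDeriv_social N κ γ δ hγ hδ cbar α hij (hαs j i)
      (hαI i j hij).1 (hαI i j hij).2).deriv]
    rw [← hsymc i j]
    linear_combination hform i j hij
  have hpos : ∀ i j, i ≠ j → 0 < cbar i j := by
    intro i j hij
    have hSi : 0 < ∑ k ∈ Finset.univ.erase i, α i k := by
      obtain ⟨j', hj', hj'pos⟩ := hαp i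
      refine Finset.sum_pos' (fun k hk => ?_) ⟨j', Finset.mem_erase.2 ⟨hj', Finset.mem_univ _⟩, hj'pos⟩
      exact (hαI i k (Ne.symm (Finset.mem_erase.1 hk).1)).1
    have hSj : 0 < ∑ k ∈ Finset.univ.erase j, α j k := by
      obtain ⟨j', hj', hj'pos⟩ := hαp j
      refine Finset.sum_pos' (fun k hk => ?_) ⟨j', Finset.mem_erase.2 ⟨hj', Finset.mem_univ _⟩, hj'pos⟩
      exact (hαI j k (Ne.symm (Finset.mem_erase.1 hk).1)).1
    have h1 : 0 ≤ 2 * γ * α i j ^ (γ - 1) / (1 - α i j ^ γ) ^ 2 :=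
      div_nonneg (mul_nonneg (by linarith) (Real.rpow_nonneg (hαI i j hij).1 _)) (sq_nonneg _)
    have h2 : 0 < δ * (∑ k ∈ Finset.univ.erase i, α i k) ^ (δ - 1) :=
      mul_pos (by linarith) (Real.rpow_pos_of_pos hSi _)
    have h3 : 0 < δ * (∑ k ∈ Finset.univ.erase j, α j k) ^ (δ - 1) :=
      mul_pos (by linarith) (Real.rpow_pos_of_pos hSj _)
    simp only [hcb, if_neg hij]
    exact div_pos (by linarith) (by positivity)
  refine ⟨cbar, ⟨hsymc, hdiag, hderiv⟩, ?_, hform, hpos, ?_⟩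
  · rintro c ⟨hcs, hcd, hc0⟩
    funext i j
    rcases eq_or_ne i j with rfl | hij
    · rw [hcd, hdiag]
    · have e := hc0 i j hij
      rw [(hasDeriv_social N κ γ δ hγ hδ c α hij (hαs j i)
        (hαI i j hij).1 (hαI i j hij).2).deriv, ← hcs i j] at e
      have h2 : 2 * κ * c i j = 2 * κ * cbar i j := by
        rw [hform i j hij]
        linear_combination e
      exact mul_left_cancel₀ hκ2 h2
  · intro β hβ hne
    exact social_opt N κ γ δ hγ hδ cbar α hα hform β hβ hne
end

section
/- Let N ≥ 2, κ, γ, δ > 1, let α ∈ [0,1)^{n_N} have no isolated vertex, and let C̄ be the unique compatibility list at which the gradient of O vanishes at α (given by 2κ c̄_{ij} = 2γ α_{ij}^{γ−1}/(1 − α_{ij}^γ)² + δ (Σ_{k≠i} α_{ik})^{δ−1} + δ (Σ_{k≠j} α_{jk})^{δ−1}). Then for every compatibility list C of positive reals satisfying c_{ij} = c̄_{ij} whenever α_{ij} > 0 and 0 < c_{ij} ≤ c̄_{ij} whenever α_{ij} = 0, the weight list α is the unique solution of the Social Optimization Problem with compatibility list C. -/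
/-- Tangent-line inequality for `rpow` with exponent `> 1`. -/
lemma rpow_tangent_aux {p : ℝ} (hp : 1 < p) {x y : ℝ} (hx : 0 ≤ x) (hy : 0 ≤ y) :
    x ^ p + p * x ^ (p - 1) * (y - x) ≤ y ^ p := by
  rcases eq_or_lt_of_le hx with h0 | h0
  · rw [← h0, Real.zero_rpow (by linarith : p ≠ 0),
      Real.zero_rpow (by linarith : p - 1 ≠ 0)]
    simpa using Real.rpow_nonneg hy p
  · have hs : -1 ≤ (y - x) / x := by
      rw [neg_le, ← neg_div, div_le_one h0]; linarith
    have hb := one_add_mul_self_le_rpow_one_add hs hp.le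
    have h1 : (1 + (y - x) / x) = y / x := by field_simp; ring
    rw [h1, Real.div_rpow hy hx] at hb
    have hxp : (0:ℝ) < x ^ p := Real.rpow_pos_of_pos h0 p
    have h2 : x ^ (p - 1) = x ^ p / x := by
      rw [Real.rpow_sub h0, Real.rpow_one]
    rw [h2]
    have h3 := mul_le_mul_of_nonneg_left hb hxp.le
    rw [mul_div_cancel₀ _ (ne_of_gt hxp)] at h3
    calc x ^ p + p * (x ^ p / x) * (y - x)
        = x ^ p * (1 + p * ((y - x) / x)) := by field_simp
      _ ≤ y ^ p := h3

/-- Strict tangent-line inequality for `x ↦ x^γ/(1-x^γ)` on `[0,1)`. -/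
lemma gkey_aux {γ : ℝ} (hγ : 1 < γ) {x y : ℝ} (hx0 : 0 ≤ x) (hx1 : x < 1)
    (hy0 : 0 ≤ y) (hy1 : y < 1) (hne : x ≠ y) :
    x ^ γ / (1 - x ^ γ) + (γ * x ^ (γ - 1) / (1 - x ^ γ) ^ 2) * (y - x)
      < y ^ γ / (1 - y ^ γ) := by
  have hγ0 : (0:ℝ) < γ := by linarith
  set u := x ^ γ with hu
  set v := y ^ γ with hv
  have hu0 : 0 ≤ u := Real.rpow_nonneg hx0 γ
  have hv0 : 0 ≤ v := Real.rpow_nonneg hy0 γ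
  have hu1 : u < 1 := Real.rpow_lt_one hx0 hx1 hγ0
  have hv1 : v < 1 := Real.rpow_lt_one hy0 hy1 hγ0
  have hA : (0:ℝ) < 1 - u := by linarith
  have hB : (0:ℝ) < 1 - v := by linarith
  set T := γ * x ^ (γ - 1) * (y - x) with hT
  have htan : u + T ≤ v := by
    have := rpow_tangent_aux hγ hx0 hy0
    rw [hT, hu, hv]; linarith
  have huv : u ≠ v := by
    rcases hne.lt_or_gt with h | h
    · exact ne_of_lt (Real.rpow_lt_rpow hx0 h hγ0)
    · exact (ne_of_lt (Real.rpow_lt_rpow hy0 h hγ0)).symm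
  have hsq : 0 < (u - v) ^ 2 := by
    rcases huv.lt_or_gt with h | h <;> nlinarith
  have hrw : u / (1 - u) + (γ * x ^ (γ - 1) / (1 - u) ^ 2) * (y - x)
      = (u * (1 - u) + T) / (1 - u) ^ 2 := by
    field_simp
    ring
  rw [hrw, div_lt_div_iff₀ (by positivity) hB]
  have h1 : T * (1 - v) ≤ (v - u) * (1 - v) :=
    mul_le_mul_of_nonneg_right (by linarith) hB.le
  nlinarith [h1, hsq]

/-- Non-strict version of `gkey_aux`. -/
lemma gkey_le_aux {γ : ℝ} (hγ : 1 < γ) {x y : ℝ} (hx0 : 0 ≤ x) (hx1 : x < 1)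
    (hy0 : 0 ≤ y) (hy1 : y < 1) :
    x ^ γ / (1 - x ^ γ) + (γ * x ^ (γ - 1) / (1 - x ^ γ) ^ 2) * (y - x)
      ≤ y ^ γ / (1 - y ^ γ) := by
  rcases eq_or_ne x y with rfl | hne
  · simp
  · exact (gkey_aux hγ hx0 hx1 hy0 hy1 hne).le

/-- Row sums. -/
noncomputable def sAux (N : ℕ) (α : Fin N → Fin N → ℝ) (i : Fin N) : ℝ :=
  ∑ k ∈ Finset.univ.erase i, α i k

/-- Partial gradient of the social objective at `α` with respect to the
(ordered) entry `(i,j)`. -/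
noncomputable def mAux (N : ℕ) (κ γ δ : ℝ) (c α : Fin N → Fin N → ℝ) (i j : Fin N) : ℝ :=
  κ * c i j - γ * α i j ^ (γ - 1) / (1 - α i j ^ γ) ^ 2 - δ * sAux N α i ^ (δ - 1)

/-- Per-individual exact decomposition of the first-order expansion. -/
lemma decompI (N : ℕ) (κ γ δ : ℝ) (c α β : Fin N → Fin N → ℝ) (i : Fin N) :
    Uind N κ γ δ c i β
      - (Uind N κ γ δ c i α
          + ∑ j ∈ Finset.univ.erase i, (β i j - α i j) * mAux N κ γ δ c α i j)
    = (∑ j ∈ Finset.univ.erase i,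
        ((α i j ^ γ / (1 - α i j ^ γ)
            + (γ * α i j ^ (γ - 1) / (1 - α i j ^ γ) ^ 2) * (β i j - α i j))
          - β i j ^ γ / (1 - β i j ^ γ)))
      + (sAux N α i ^ δ + δ * sAux N α i ^ (δ - 1) * (sAux N β i - sAux N α i)
          - sAux N β i ^ δ) := by
  have hd : sAux N β i - sAux N α i
      = ∑ j ∈ Finset.univ.erase i, (β i j - α i j) := by
    rw [sAux, sAux, ← Finset.sum_sub_distrib]
  have hsum : (∑ j ∈ Finset.univ.erase i,
        ((κ * β i j * c i j - β i j ^ γ / (1 - β i j ^ γ))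
          - (κ * α i j * c i j - α i j ^ γ / (1 - α i j ^ γ))
          - (β i j - α i j) * mAux N κ γ δ c α i j))
      = ∑ j ∈ Finset.univ.erase i,
        (((α i j ^ γ / (1 - α i j ^ γ)
            + (γ * α i j ^ (γ - 1) / (1 - α i j ^ γ) ^ 2) * (β i j - α i j))
          - β i j ^ γ / (1 - β i j ^ γ))
          + δ * sAux N α i ^ (δ - 1) * (β i j - α i j)) :=
    Finset.sum_congr rfl fun j _ => by rw [mAux]; ring
  rw [hd, Finset.mul_sum]
  rw [Uind, Uind]
  simp only [sAux] at hsum ⊢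
  simp only [Finset.sum_sub_distrib, Finset.sum_add_distrib] at hsum ⊢
  linarith [hsum]

/-- Let α be a feasible weight list and C̄ the compatibility list given by
2κ c̄_{ij} = 2γ α_{ij}^{γ−1}/(1−α_{ij}^γ)² + δ(Σ_{k≠i} α_{ik})^{δ−1}
+ δ(Σ_{k≠j} α_{jk})^{δ−1}. Then for every positive compatibility list C with
c_{ij} = c̄_{ij} whenever α_{ij} > 0 and 0 < c_{ij} ≤ c̄_{ij} whenever
α_{ij} = 0, the weight list α is the unique solution of the Social
Optimization Problem with compatibility list C. -/
theorem stmt_12 (N : ℕ) (hN : 2 ≤ N) (κ γ δ : ℝ) (hκ : 1 < κ) (hγ : 1 < γ) (hδ : 1 < δ)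
    (α : Fin N → Fin N → ℝ) (hα : WeightFeasible N α)
    (cbar : Fin N → Fin N → ℝ) (hcbars : ∀ i j, cbar i j = cbar j i)
    (hcbar : ∀ i j, i ≠ j → 2 * κ * cbar i j =
      2 * γ * α i j ^ (γ - 1) / (1 - α i j ^ γ) ^ 2
        + δ * (∑ k ∈ Finset.univ.erase i, α i k) ^ (δ - 1)
        + δ * (∑ k ∈ Finset.univ.erase j, α j k) ^ (δ - 1))
    (c : Fin N → Fin N → ℝ) (hcs : ∀ i j, c i j = c j i)
    (hcpos : ∀ i j, i ≠ j → 0 < c i j)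
    (hceq : ∀ i j, i ≠ j → 0 < α i j → c i j = cbar i j)
    (hcle : ∀ i j, i ≠ j → α i j = 0 → c i j ≤ cbar i j) :
    ∀ β : Fin N → Fin N → ℝ, WeightFeasible N β → β ≠ α →
      socialObj N κ γ δ c β < socialObj N κ γ δ c α := by
  intro β hβ hβne
  obtain ⟨hαs, hαd, hαI, hαiso⟩ := hα
  obtain ⟨hβs, hβd, hβI, hβiso⟩ := hβ
  -- row sums are nonnegative
  have hsA0 : ∀ i, 0 ≤ sAux N α i := fun i =>
    Finset.sum_nonneg fun j hj =>
      (hαI i j (Ne.symm (Finset.mem_erase.mp hj).1)).1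
  have hsB0 : ∀ i, 0 ≤ sAux N β i := fun i =>
    Finset.sum_nonneg fun j hj =>
      (hβI i j (Ne.symm (Finset.mem_erase.mp hj).1)).1
  -- a differing off-diagonal pair
  obtain ⟨i0, j0, h0⟩ : ∃ i j, β i j ≠ α i j := by
    by_contra h
    push_neg at h
    exact hβne (funext fun i => funext fun j => h i j)
  have hij0 : i0 ≠ j0 := by
    rintro rfl
    exact h0 (by rw [hβd, hαd])
  -- per-individual first-order bounds
  have hgterm : ∀ i j, j ∈ Finset.univ.erase i →
      (α i j ^ γ / (1 - α i j ^ γ)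
          + (γ * α i j ^ (γ - 1) / (1 - α i j ^ γ) ^ 2) * (β i j - α i j))
        - β i j ^ γ / (1 - β i j ^ γ) ≤ 0 := by
    intro i j hj
    have hji : i ≠ j := Ne.symm (Finset.mem_erase.mp hj).1
    have hIα := hαI i j hji
    have hIβ := hβI i j hji
    have := gkey_le_aux hγ hIα.1 hIα.2 hIβ.1 hIβ.2
    linarith
  have hdelta : ∀ i, sAux N α i ^ δ
      + δ * sAux N α i ^ (δ - 1) * (sAux N β i - sAux N α i) - sAux N β i ^ δ ≤ 0 := by
    intro i
    have := rpow_tangent_aux hδ (hsA0 i) (hsB0 i)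
    linarith
  have hBound : ∀ i, Uind N κ γ δ c i β ≤ Uind N κ γ δ c i α
      + ∑ j ∈ Finset.univ.erase i, (β i j - α i j) * mAux N κ γ δ c α i j := by
    intro i
    have h1 : (∑ j ∈ Finset.univ.erase i,
        ((α i j ^ γ / (1 - α i j ^ γ)
            + (γ * α i j ^ (γ - 1) / (1 - α i j ^ γ) ^ 2) * (β i j - α i j))
          - β i j ^ γ / (1 - β i j ^ γ))) ≤ 0 :=
      Finset.sum_nonpos fun j hj => hgterm i j hj
    have h3 := decompI N κ γ δ c α β i
    have h2 := hdelta i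
    linarith
  have hBound0 : Uind N κ γ δ c i0 β < Uind N κ γ δ c i0 α
      + ∑ j ∈ Finset.univ.erase i0, (β i0 j - α i0 j) * mAux N κ γ δ c α i0 j := by
    have hj0 : j0 ∈ Finset.univ.erase i0 :=
      Finset.mem_erase.mpr ⟨Ne.symm hij0, Finset.mem_univ j0⟩
    have h1 : (∑ j ∈ Finset.univ.erase i0,
        ((α i0 j ^ γ / (1 - α i0 j ^ γ)
            + (γ * α i0 j ^ (γ - 1) / (1 - α i0 j ^ γ) ^ 2) * (β i0 j - α i0 j))
          - β i0 j ^ γ / (1 - β i0 j ^ γ)))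
        < ∑ j ∈ Finset.univ.erase i0, (0:ℝ) := by
      refine Finset.sum_lt_sum (fun j hj => hgterm i0 j hj) ⟨j0, hj0, ?_⟩
      have hIα := hαI i0 j0 hij0
      have hIβ := hβI i0 j0 hij0
      have := gkey_aux hγ hIα.1 hIα.2 hIβ.1 hIβ.2 (Ne.symm h0)
      linarith
    rw [Finset.sum_const_zero] at h1
    have h3 := decompI N κ γ δ c α β i0
    have h2 := hdelta i0
    linarith
  -- sum up, with strictness at i0
  have hlt : socialObj N κ γ δ c β < socialObj N κ γ δ c α
      + ∑ i, ∑ j ∈ Finset.univ.erase i, (β i j - α i j) * mAux N κ γ δ c α i j := by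
    have h := Finset.sum_lt_sum (s := Finset.univ)
      (f := fun i => Uind N κ γ δ c i β)
      (g := fun i => Uind N κ γ δ c i α
        + ∑ j ∈ Finset.univ.erase i, (β i j - α i j) * mAux N κ γ δ c α i j)
      (fun i _ => hBound i) ⟨i0, Finset.mem_univ i0, hBound0⟩
    rw [Finset.sum_add_distrib] at h
    simpa [socialObj] using h
  -- the gradient term is nonpositive
  have hErase : ∀ i, (∑ j ∈ Finset.univ.erase i,
        (β i j - α i j) * mAux N κ γ δ c α i j)
      = ∑ j, (β i j - α i j) * mAux N κ γ δ c α i j := by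
    intro i
    exact Finset.sum_erase _ (by rw [hβd, hαd]; ring)
  have hpair : ∀ i j : Fin N,
      (β i j - α i j) * mAux N κ γ δ c α i j
        + (β j i - α j i) * mAux N κ γ δ c α j i ≤ 0 := by
    intro i j
    rcases eq_or_ne i j with rfl | hij
    · rw [hβd, hαd]; simp
    · have hm : mAux N κ γ δ c α i j + mAux N κ γ δ c α j i
          = 2 * κ * (c i j - cbar i j) := by
        rw [mAux, mAux, sAux, sAux, hαs j i, hcs j i]
        have h1 := hcbar i j hij
        have h2 : 2 * γ * α i j ^ (γ - 1) / (1 - α i j ^ γ) ^ 2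
            = 2 * (γ * α i j ^ (γ - 1) / (1 - α i j ^ γ) ^ 2) := by ring
        linarith
      have hsymm : (β j i - α j i) = (β i j - α i j) := by
        rw [hβs j i, hαs j i]
      rw [hsymm]
      have hcomb : (β i j - α i j) * mAux N κ γ δ c α i j
          + (β i j - α i j) * mAux N κ γ δ c α j i
          = (β i j - α i j) * (2 * κ * (c i j - cbar i j)) := by
        rw [← mul_add, hm]
      rw [hcomb]
      rcases (hαI i j hij).1.eq_or_lt with heq | hpos
      · have h1 : 0 ≤ β i j - α i j := by
          have := (hβI i j hij).1; rw [← heq]; linarith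
        have h2 : 2 * κ * (c i j - cbar i j) ≤ 0 := by
          have := hcle i j hij heq.symm
          nlinarith
        exact mul_nonpos_of_nonneg_of_nonpos h1 h2
      · rw [hceq i j hij hpos]
        simp
  have hS : (∑ i, ∑ j, (β i j - α i j) * mAux N κ γ δ c α i j) ≤ 0 := by
    have hswap : (∑ i, ∑ j, (β i j - α i j) * mAux N κ γ δ c α i j)
        = ∑ i, ∑ j, (β j i - α j i) * mAux N κ γ δ c α j i := Finset.sum_comm
    have h2S : (∑ i, ∑ j, (β i j - α i j) * mAux N κ γ δ c α i j)
        + (∑ i, ∑ j, (β i j - α i j) * mAux N κ γ δ c α i j)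
        = ∑ i : Fin N, ∑ j : Fin N,
            ((β i j - α i j) * mAux N κ γ δ c α i j
              + (β j i - α j i) * mAux N κ γ δ c α j i) := by
      nth_rewrite 2 [hswap]
      rw [← Finset.sum_add_distrib]
      exact Finset.sum_congr rfl fun i _ => by rw [← Finset.sum_add_distrib]
    have h2 : (∑ i : Fin N, ∑ j : Fin N,
        ((β i j - α i j) * mAux N κ γ δ c α i j
          + (β j i - α j i) * mAux N κ γ δ c α j i)) ≤ 0 :=
      Finset.sum_nonpos fun i _ => Finset.sum_nonpos fun j _ => hpair i j
    linarith [h2S ▸ h2]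
  have hS' : (∑ i, ∑ j ∈ Finset.univ.erase i,
      (β i j - α i j) * mAux N κ γ δ c α i j) ≤ 0 := by
    calc (∑ i, ∑ j ∈ Finset.univ.erase i, (β i j - α i j) * mAux N κ γ δ c α i j)
        = ∑ i, ∑ j, (β i j - α i j) * mAux N κ γ δ c α i j :=
          Finset.sum_congr rfl fun i _ => hErase i
      _ ≤ 0 := hS
  linarith
end

section
/- Let N ≥ 2, κ, γ, δ > 1, and let (c_{ij})_{i≠j} be a symmetric family of positive reals (c_{ij} = c_{ji}) such that all the vectors C^i = (c_{ij})_{j≠i}, viewed as multisets (equivalently, each is a permutation of a common vector c̄ ∈ (0,∞)^{N−1}), coincide. For each i let (α^i)* ∈ [0,1)^{N−1} be the unique maximizer of the ALKY utility U(·; C^i). Then for all k ≠ m, the weight individual k assigns to individual m equals the weight individual m assigns to individual k: (α^k)*_m = (α^m)*_k. -/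
/-- The ALKY utility function over an arbitrary finite index type, with
parameters κ, γ, δ and compatibility vector c, as a function of the weight
vector α. -/
noncomputable def ALKY' {ι : Type*} [Fintype ι] (κ γ δ : ℝ) (c : ι → ℝ)
    (α : ι → ℝ) : ℝ :=
  (∑ j, (κ * α j * c j - α j ^ γ / (1 - α j ^ γ))) - (∑ j, α j) ^ δ

lemma ALKY'_reindex {ι ι' : Type*} [Fintype ι] [Fintype ι'] (κ γ δ : ℝ)
    (c : ι → ℝ) (c' : ι' → ℝ) (e : ι ≃ ι') (hc : ∀ j, c' (e j) = c j)
    (f : ι' → ℝ) : ALKY' κ γ δ c (f ∘ e) = ALKY' κ γ δ c' f := by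
  unfold ALKY'
  congr 1
  · exact Fintype.sum_equiv e _ _ (fun j => by simp [hc j])
  · congr 1
    exact Fintype.sum_equiv e _ _ (fun j => rfl)

lemma maximizer_reindex {ι ι' : Type*} [Fintype ι] [Fintype ι'] (κ γ δ : ℝ)
    (c : ι → ℝ) (c' : ι' → ℝ) (e : ι ≃ ι') (hc : ∀ j, c' (e j) = c j)
    (α : ι → ℝ) (α' : ι' → ℝ)
    (hmα : ∀ j, α j ∈ Set.Ico (0:ℝ) 1) (hmα' : ∀ j, α' j ∈ Set.Ico (0:ℝ) 1)
    (hmaxα : ∀ β : ι → ℝ, (∀ j, β j ∈ Set.Ico (0:ℝ) 1) → β ≠ α →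
      ALKY' κ γ δ c β < ALKY' κ γ δ c α)
    (hmaxα' : ∀ β : ι' → ℝ, (∀ j, β j ∈ Set.Ico (0:ℝ) 1) → β ≠ α' →
      ALKY' κ γ δ c' β < ALKY' κ γ δ c' α') :
    α' = α ∘ e.symm := by
  by_contra hne
  have h1 : ALKY' κ γ δ c' (α ∘ e.symm) < ALKY' κ γ δ c' α' :=
    hmaxα' _ (fun j => hmα _) (fun h => hne h.symm)
  have h2 : ALKY' κ γ δ c (α' ∘ e) < ALKY' κ γ δ c α := by
    refine hmaxα _ (fun j => hmα' _) ?_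
    intro h
    apply hne
    funext j'
    have := congrFun h (e.symm j')
    simpa using this
  have e1 : ALKY' κ γ δ c ((α ∘ e.symm) ∘ e) = ALKY' κ γ δ c' (α ∘ e.symm) :=
    ALKY'_reindex κ γ δ c c' e hc _
  have e2 : ALKY' κ γ δ c (α' ∘ e) = ALKY' κ γ δ c' α' :=
    ALKY'_reindex κ γ δ c c' e hc _
  have e3 : (α ∘ e.symm) ∘ e = α := by funext j; simp
  rw [e3] at e1
  linarith

/-- Invisible-hand symmetry: if all the compatibility "columns"
C^i = (c_{ij})_{j≠i} are permutations of a common vector c̄, and (α^i)* is the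
unique maximizer of the ALKY utility U(·; C^i) on [0,1)^(N−1), then for all
k ≠ m the weight that k assigns to m equals the weight m assigns to k. -/
theorem stmt_14 (N : ℕ) (hN : 2 ≤ N) (κ γ δ : ℝ) (hκ : 1 < κ) (hγ : 1 < γ) (hδ : 1 < δ)
    (c : Fin N → Fin N → ℝ) (hcs : ∀ i j, c i j = c j i)
    (hcpos : ∀ i j, i ≠ j → 0 < c i j)
    (cbar : Fin (N - 1) → ℝ)
    (hperm : ∀ i : Fin N, ∃ e : {j : Fin N // j ≠ i} ≃ Fin (N - 1),
      ∀ j : {j : Fin N // j ≠ i}, c i j.val = cbar (e j))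
    (αstar : (i : Fin N) → {j : Fin N // j ≠ i} → ℝ)
    (hmem : ∀ (i : Fin N) (j : {j : Fin N // j ≠ i}), αstar i j ∈ Set.Ico (0:ℝ) 1)
    (hmax : ∀ i : Fin N, ∀ β : {j : Fin N // j ≠ i} → ℝ,
      (∀ j, β j ∈ Set.Ico (0:ℝ) 1) → β ≠ αstar i →
      ALKY' κ γ δ (fun j : {j : Fin N // j ≠ i} => c i j.val) β <
        ALKY' κ γ δ (fun j : {j : Fin N // j ≠ i} => c i j.val) (αstar i)) :
    ∀ (k m : Fin N) (h : k ≠ m), αstar k ⟨m, h.symm⟩ = αstar m ⟨k, h⟩ := by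
  intro k m h
  obtain ⟨e₁, he₁⟩ := hperm k
  obtain ⟨e₂, he₂⟩ := hperm m
  set e0 : {j : Fin N // j ≠ k} ≃ {j : Fin N // j ≠ m} := e₁.trans e₂.symm with he0def
  have he0 : ∀ j : {j : Fin N // j ≠ k}, c m (e0 j).val = c k j.val := by
    intro j
    have : c m (e0 j).val = cbar (e₂ (e0 j)) := he₂ _
    simpa [he0def, he₁ j] using this
  set a : {j : Fin N // j ≠ m} := e0 ⟨m, h.symm⟩ with hadef
  set b : {j : Fin N // j ≠ m} := ⟨k, h⟩ with hbdef
  have hab : c m a.val = c m b.val := by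
    rw [he0 ⟨m, h.symm⟩]
    simp [hbdef, hcs k m]
  have hswap : ∀ x : {j : Fin N // j ≠ m},
      c m ((Equiv.swap a b x).val) = c m x.val := by
    intro x
    rcases eq_or_ne x a with rfl | hxa
    · rw [Equiv.swap_apply_left, ← hab]
    rcases eq_or_ne x b with rfl | hxb
    · rw [Equiv.swap_apply_right, hab]
    · rw [Equiv.swap_apply_of_ne_of_ne hxa hxb]
  set e : {j : Fin N // j ≠ k} ≃ {j : Fin N // j ≠ m} := e0.trans (Equiv.swap a b)
    with hedef
  have hc : ∀ j : {j : Fin N // j ≠ k}, c m (e j).val = c k j.val := by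
    intro j
    simpa [hedef, hswap] using he0 j
  have key := maximizer_reindex κ γ δ
    (fun j : {j : Fin N // j ≠ k} => c k j.val)
    (fun j : {j : Fin N // j ≠ m} => c m j.val)
    e hc (αstar k) (αstar m) (hmem k) (hmem m) (hmax k) (hmax m)
  have hes : e.symm b = ⟨m, h.symm⟩ := by
    have : e ⟨m, h.symm⟩ = b := by
      simp [hedef, ← hadef, Equiv.swap_apply_left]
    rw [← this, Equiv.symm_apply_apply]
  have hb := congrFun key b
  simp only [Function.comp_apply, hes] at hb
  exact hb.symm
end

section
/- Let N ≥ 2, κ, γ, δ > 1, let C be a compatibility list of positive reals, and let α* be the unique solution of the Social Optimization Problem. Then the graph defined by α* is pairwise stable: for every pair i < j and every a ∈ [0,1) with a ≠ α*_{ij}, letting α' be equal to α* except that α'_{ij} = a, if α' lies in the feasible set F then at least one of the two individuals strictly loses, i.e. U_i(α') < U_i(α*) or U_j(α') < U_j(α*). -/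
/-- The unique solution α* of the Social Optimization Problem is pairwise
stable: for every pair i ≠ j and every alternative weight a ∈ [0,1) with
a ≠ α*_{ij}, if changing only the weight of the edge {i,j} to a stays in the
feasible set, then at least one of the two individuals strictly loses. -/
theorem stmt_17 (N : ℕ) (hN : 2 ≤ N) (κ γ δ : ℝ) (hκ : 1 < κ) (hγ : 1 < γ) (hδ : 1 < δ)
    (c : Fin N → Fin N → ℝ) (hcs : ∀ i j, c i j = c j i)
    (hcpos : ∀ i j, i ≠ j → 0 < c i j)
    (αstar : Fin N → Fin N → ℝ) (hfeas : WeightFeasible N αstar)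
    (hmax : ∀ β : Fin N → Fin N → ℝ, WeightFeasible N β → β ≠ αstar →
      socialObj N κ γ δ c β < socialObj N κ γ δ c αstar) :
    ∀ i j : Fin N, i ≠ j → ∀ a ∈ Set.Ico (0:ℝ) 1, a ≠ αstar i j →
      WeightFeasible N (upd αstar i j a) →
      Uind N κ γ δ c i (upd αstar i j a) < Uind N κ γ δ c i αstar ∨
      Uind N κ γ δ c j (upd αstar i j a) < Uind N κ γ δ c j αstar := by
  intro i j hij a ha hne hfeas'
  by_contra h
  push_neg at h
  obtain ⟨hi, hj⟩ := h
  set β := upd αstar i j a with hβ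
  have hbne : β ≠ αstar := by
    intro hEq
    apply hne
    have : β i j = αstar i j := by rw [hEq]
    simpa [hβ, upd] using this
  have hlt := hmax β hfeas' hbne
  have hle : socialObj N κ γ δ c αstar ≤ socialObj N κ γ δ c β := by
    unfold socialObj
    apply Finset.sum_le_sum
    intro k _
    by_cases hki : k = i
    · subst hki; exact hi
    · by_cases hkj : k = j
      · subst hkj; exact hj
      · have hrow : ∀ l, β k l = αstar k l := by
          intro l
          simp [hβ, upd, hki, hkj]
        unfold Uind
        simp only [hrow]
        exact le_refl _

  linarith
end
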